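/- Let t, n, m ≥ 1 be integers with m^{t−1} ≤ n, and let G be an n-vertex graph with no clique of size m. Then G has at least n^t / m^{t(t−1)} independent sets of size t. -/

import Mathlib

open Finset

/-- Ramsey-type lemma: a vertex subset `W` of size at least `m^(t-1)` containing no
`m`-clique contains an independent set of size `t`. -/
lemma aux_indep_of_no_clique {V : Type} [DecidableEq V] (G : SimpleGraph V)
    [DecidableRel G.Adj] :
    ∀ k t m : ℕ, t + m ≤ k → 1 ≤ t → ∀ W : Finset V,
      (∀ s : Finset V, s ⊆ W → ¬ G.IsNClique m s) → m ^ (t - 1) ≤ W.card →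
      ∃ S : Finset V, S ⊆ W ∧ S.card = t ∧ ∀ x ∈ S, ∀ y ∈ S, ¬ G.Adj x y := by
  intro k
  induction k with
  | zero => intro t m hk ht; omega
  | succ k ih =>
    intro t m hk ht W hclique hcard
    match m, t with
    | 0, t =>
      exact absurd (hclique ∅ (empty_subset W)) (by simp)
    | m + 1, 1 =>
      obtain ⟨v, hv⟩ : W.Nonempty := card_pos.mp (by simpa using hcard)
      exact ⟨{v}, by simpa using hv, by simp, by
        intro x hx y hy
        simp only [mem_singleton] at hx hy
        subst hx; subst hy; exact G.irrefl⟩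
    | 1, t + 2 =>
      obtain ⟨v, hv⟩ : W.Nonempty := card_pos.mp (le_trans (Nat.one_le_pow _ _ one_pos) hcard)
      exact absurd (hclique {v} (by simpa using hv)) (by simp)
    | M + 2, T + 2 =>
      obtain ⟨v, hv⟩ : W.Nonempty :=
        card_pos.mp (le_trans (Nat.one_le_pow _ _ (by omega)) hcard)
      set A := (W.erase v).filter (fun x => ¬ G.Adj v x) with hA
      set B := (W.erase v).filter (fun x => G.Adj v x) with hB
      have hAB : A.card + B.card = W.card - 1 := by
        have h : B.card + A.card = (W.erase v).card := by
          rw [hA, hB]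
          simpa using Finset.card_filter_add_card_filter_not
            (s := W.erase v) (p := fun x => G.Adj v x)
        rw [card_erase_of_mem hv] at h
        omega
      by_cases hBcard : (M + 1) ^ (T + 1) ≤ B.card
      · -- neighbourhood branch: reduce clique size
        have hBclique : ∀ s : Finset V, s ⊆ B → ¬ G.IsNClique (M + 1) s := by
          intro s hs hcl
          have hvs : v ∉ s := by
            intro hvin
            have := hs hvin
            rw [hB, mem_filter] at this
            exact G.irrefl this.2
          have hadj : ∀ b ∈ s, G.Adj v b := by
            intro b hb
            have := hs hb
            rw [hB, mem_filter] at this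
            exact this.2
          have : G.IsNClique (M + 2) (insert v s) := by
            have h2 := hcl.insert hadj
            convert h2 using 2
          refine hclique (insert v s) ?_ this
          refine insert_subset hv (hs.trans ?_)
          rw [hB]
          exact (filter_subset _ _).trans (erase_subset _ _)
        obtain ⟨S, hSB, hScard, hSind⟩ :=
          ih (T + 2) (M + 1) (by omega) (by omega) B hBclique (by simpa using hBcard)
        exact ⟨S, hSB.trans ((by rw [hB]; exact (filter_subset _ _).trans (erase_subset _ _)) :
          B ⊆ W), hScard, hSind⟩
      · -- non-neighbourhood branch: reduce independent set size
        push_neg at hBcard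
        have hpow : (M + 2) ^ T + (M + 1) ^ (T + 1) ≤ (M + 2) ^ (T + 1) := by
          calc (M + 2) ^ T + (M + 1) ^ (T + 1)
              = (M + 2) ^ T + (M + 1) * (M + 1) ^ T := by ring
            _ ≤ (M + 2) ^ T + (M + 1) * (M + 2) ^ T := by
                have := Nat.pow_le_pow_left (show M + 1 ≤ M + 2 by omega) T
                exact Nat.add_le_add_left (Nat.mul_le_mul_left _ this) _
            _ = (M + 2) ^ (T + 1) := by ring
        have hWcard : (M + 2) ^ (T + 1) ≤ W.card := by simpa using hcard
        have hAcard : (M + 2) ^ T ≤ A.card := by omega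
        have hAclique : ∀ s : Finset V, s ⊆ A → ¬ G.IsNClique (M + 2) s := by
          intro s hs
          refine hclique s (hs.trans ?_)
          rw [hA]
          exact (filter_subset _ _).trans (erase_subset _ _)
        obtain ⟨S, hSA, hScard, hSind⟩ :=
          ih (T + 1) (M + 2) (by omega) (by omega) A hAclique (by simpa using hAcard)
        have hvA : v ∉ A := fun h => notMem_erase v W ((filter_subset _ _) h)
        have hvS : v ∉ S := fun h => hvA (hSA h)
        have hnadj : ∀ x ∈ S, ¬ G.Adj v x := by
          intro x hx
          have := hSA hx
          rw [hA, mem_filter] at this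
          exact this.2
        refine ⟨insert v S, ?_, ?_, ?_⟩
        · exact insert_subset hv (hSA.trans ((filter_subset _ _).trans (erase_subset _ _)))
        · rw [card_insert_of_notMem hvS, hScard]
        · intro x hx y hy
          rcases mem_insert.mp hx with rfl | hx' <;> rcases mem_insert.mp hy with rfl | hy'
          · exact G.irrefl
          · exact hnadj y hy'
          · exact fun h => hnadj x hx' h.symm
          · exact hSind x hx' y hy'

/-- Key numeric inequality: `n^t * (N)_t ≤ N^t * (n)_t` for `t ≤ N ≤ n`. -/
lemma aux_pow_descFactorial :
    ∀ t N n : ℕ, t ≤ N → N ≤ n →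
      n ^ t * N.descFactorial t ≤ N ^ t * n.descFactorial t := by
  intro t
  induction t with
  | zero => intro N n _ _; simp
  | succ t ih =>
    intro N n ht hNn
    have htN : t ≤ N := by omega
    have htn : t ≤ n := by omega
    have key : n * (N - t) ≤ N * (n - t) := by
      have h1 : n * (N - t) + n * t = n * N := by
        rw [← Nat.mul_add, Nat.sub_add_cancel htN]
      have h2 : N * (n - t) + N * t = N * n := by
        rw [← Nat.mul_add, Nat.sub_add_cancel htn]
      have h3 : N * t ≤ n * t := Nat.mul_le_mul_right t hNn
      have h4 : n * (N - t) + N * t ≤ n * (N - t) + n * t := Nat.add_le_add_left h3 _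
      rw [h1] at h4
      have h5 : n * N = N * (n - t) + N * t := by rw [h2, Nat.mul_comm]
      rw [h5] at h4
      exact Nat.le_of_add_le_add_right h4
    calc n ^ (t + 1) * N.descFactorial (t + 1)
        = (n * (N - t)) * (n ^ t * N.descFactorial t) := by
          rw [pow_succ, Nat.descFactorial_succ]; ring
      _ ≤ (N * (n - t)) * (N ^ t * n.descFactorial t) := Nat.mul_le_mul key (ih N n htN hNn)
      _ = N ^ (t + 1) * n.descFactorial (t + 1) := by
          rw [pow_succ, Nat.descFactorial_succ]; ring

theorem stmt13 (t n m : ℕ) (ht : 1 ≤ t) (hn : 1 ≤ n) (hm : 1 ≤ m)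
    (hmn : m ^ (t - 1) ≤ n) (G : SimpleGraph (Fin n)) [DecidableRel G.Adj]
    (hG : G.CliqueFree m) :
    (n : ℝ) ^ t / (m : ℝ) ^ (t * (t - 1)) ≤
      (((Finset.powersetCard t (Finset.univ : Finset (Fin n))).filter
        (fun S => ∀ x ∈ S, ∀ y ∈ S, ¬ G.Adj x y)).card : ℝ) := by
  classical
  -- rule out m = 1
  rcases Nat.lt_or_ge m 2 with hm1 | hm2
  · exfalso
    have hm1' : m = 1 := by omega
    subst hm1'
    have ⟨v⟩ : Nonempty (Fin n) := ⟨⟨0, hn⟩⟩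
    exact hG {v} (by simp)
  set N := m ^ (t - 1) with hN
  have htN : t ≤ N := by
    have h1 : t ≤ 2 ^ (t - 1) := by
      have := Nat.lt_two_pow_self (n := t - 1)
      omega
    exact h1.trans (Nat.pow_le_pow_left hm2 _)
  set F := (Finset.powersetCard t (Finset.univ : Finset (Fin n))).filter
      (fun S => ∀ x ∈ S, ∀ y ∈ S, ¬ G.Adj x y) with hF
  set D := Finset.powersetCard N (Finset.univ : Finset (Fin n)) with hD
  -- every N-subset contains an independent t-set
  have hex : ∀ W ∈ D, ∃ S : Finset (Fin n), S ⊆ W ∧ S.card = t ∧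
      ∀ x ∈ S, ∀ y ∈ S, ¬ G.Adj x y := by
    intro W hW
    rw [hD, mem_powersetCard] at hW
    exact aux_indep_of_no_clique G (t + m) t m le_rfl ht W (fun s _ => hG s)
      (hW.2 ▸ le_rfl)
  -- choice function
  set f : Finset (Fin n) → Finset (Fin n) := fun W =>
    if h : ∃ S : Finset (Fin n), S ⊆ W ∧ S.card = t ∧ ∀ x ∈ S, ∀ y ∈ S, ¬ G.Adj x y
    then h.choose else ∅ with hf
  have hfspec : ∀ W ∈ D, f W ⊆ W ∧ (f W).card = t ∧ ∀ x ∈ f W, ∀ y ∈ f W, ¬ G.Adj x y := by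
    intro W hW
    have h := hex W hW
    rw [hf]
    simp only [dif_pos h]
    exact h.choose_spec
  have himg : D.image f ⊆ F := by
    intro S hS
    obtain ⟨W, hW, rfl⟩ := mem_image.mp hS
    obtain ⟨h1, h2, h3⟩ := hfspec W hW
    rw [hF, mem_filter, mem_powersetCard]
    exact ⟨⟨subset_univ _, h2⟩, h3⟩
  set K := (n - t).choose (N - t) with hK
  -- fiber bound
  have hfiber : ∀ S ∈ D.image f, (D.filter (fun W => f W = S)).card ≤ K := by
    intro S hS
    obtain ⟨W₀, hW₀, rfl⟩ := mem_image.mp hS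
    have hScard : (f W₀).card = t := (hfspec W₀ hW₀).2.1
    set S := f W₀
    have hsub : D.filter (fun W => f W = S) ⊆ D.filter (fun W => S ⊆ W) := by
      intro W hW
      rw [mem_filter] at hW ⊢
      exact ⟨hW.1, hW.2 ▸ (hfspec W hW.1).1⟩
    refine le_trans (card_le_card hsub) ?_
    have hinj : ∀ W₁ ∈ D.filter (fun W => S ⊆ W), ∀ W₂ ∈ D.filter (fun W => S ⊆ W),
        W₁ \ S = W₂ \ S → W₁ = W₂ := by
      intro W₁ h₁ W₂ h₂ heq
      rw [mem_filter] at h₁ h₂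
      rw [← Finset.sdiff_union_of_subset h₁.2, ← Finset.sdiff_union_of_subset h₂.2, heq]
    have hmaps : ∀ W ∈ D.filter (fun W => S ⊆ W),
        W \ S ∈ Finset.powersetCard (N - t) (Finset.univ \ S) := by
      intro W hW
      rw [mem_filter] at hW
      have hWD := hW.1
      rw [hD, mem_powersetCard] at hWD
      rw [mem_powersetCard]
      constructor
      · exact Finset.sdiff_subset_sdiff (subset_univ _) (le_refl S)
      · rw [card_sdiff_of_subset hW.2, hWD.2, hScard]
    have := Finset.card_le_card_of_injOn (fun W => W \ S) hmaps hinj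
    refine this.trans ?_
    rw [Finset.card_powersetCard, card_sdiff_of_subset (subset_univ S), hScard, card_univ,
      Fintype.card_fin, hK]
  have hcount : D.card ≤ K * (D.image f).card :=
    Finset.card_le_mul_card_image D K hfiber
  have hDcard : D.card = n.choose N := by
    rw [hD, Finset.card_powersetCard, card_univ, Fintype.card_fin]
  have hmain : n.choose N ≤ K * F.card := by
    calc n.choose N = D.card := hDcard.symm
      _ ≤ K * (D.image f).card := hcount
      _ ≤ K * F.card := Nat.mul_le_mul_left K (card_le_card himg)
  -- binomial identity: C(n,N)*C(N,t) = C(n,t)*C(n-t,N-t)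
  have hid : n.choose N * N.choose t = n.choose t * K := by
    rw [hK]; exact Nat.choose_mul htN
  have hKpos : 0 < K := by
    rw [hK]; exact Nat.choose_pos (Nat.sub_le_sub_right hmn t)
  have hchoose : n.choose t ≤ F.card * N.choose t := by
    have h1 : n.choose t * K ≤ (F.card * N.choose t) * K := by
      calc n.choose t * K = n.choose N * N.choose t := hid.symm
        _ ≤ (K * F.card) * N.choose t := Nat.mul_le_mul_right _ hmain
        _ = (F.card * N.choose t) * K := by ring
    exact Nat.le_of_mul_le_mul_right h1 hKpos
  -- n^t * C(N,t) ≤ N^t * C(n,t)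
  have hdesc := aux_pow_descFactorial t N n htN hmn
  rw [Nat.descFactorial_eq_factorial_mul_choose, Nat.descFactorial_eq_factorial_mul_choose]
    at hdesc
  have hpowchoose : n ^ t * N.choose t ≤ N ^ t * n.choose t := by
    have h1 : (n ^ t * N.choose t) * t.factorial ≤ (N ^ t * n.choose t) * t.factorial := by
      calc (n ^ t * N.choose t) * t.factorial = n ^ t * (t.factorial * N.choose t) := by ring
        _ ≤ N ^ t * (t.factorial * n.choose t) := hdesc
        _ = (N ^ t * n.choose t) * t.factorial := by ring
    exact Nat.le_of_mul_le_mul_right h1 t.factorial_pos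
  have hNtpos : 0 < N.choose t := Nat.choose_pos htN
  have hfinal : n ^ t ≤ N ^ t * F.card := by
    have h1 : n ^ t * N.choose t ≤ (N ^ t * F.card) * N.choose t := by
      calc n ^ t * N.choose t ≤ N ^ t * n.choose t := hpowchoose
        _ ≤ N ^ t * (F.card * N.choose t) := Nat.mul_le_mul_left _ hchoose
        _ = (N ^ t * F.card) * N.choose t := by ring
    exact Nat.le_of_mul_le_mul_right h1 hNtpos
  -- pass to the reals
  have hNpow : (N : ℝ) ^ t = (m : ℝ) ^ (t * (t - 1)) := by
    rw [hN]
    push_cast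
    rw [← pow_mul, Nat.mul_comm]
  have hmpos : (0 : ℝ) < (m : ℝ) ^ (t * (t - 1)) := by
    apply pow_pos
    exact_mod_cast hm
  rw [div_le_iff₀ hmpos]
  have hcast : (n : ℝ) ^ t ≤ (N : ℝ) ^ t * F.card := by
    exact_mod_cast hfinal
  rw [hNpow] at hcast
  calc (n : ℝ) ^ t ≤ (m : ℝ) ^ (t * (t - 1)) * F.card := hcast
    _ = (F.card : ℝ) * (m : ℝ) ^ (t * (t - 1)) := by ring
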